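/- Let ξ ∈ (0,1), η ∈ (ξ,1), and let d be the smallest index with a_d ≤ ξx. (i) If (log ξ)/(log η) is not an integer and x ≥ max( (1 − η²ξ)/(ξ(1−η)²) , (⌊(log ξ)/(log η)⌋ + 2)/(ξ − η^{⌊(log ξ)/(log η)⌋ + 1}) , 1/(η^{⌊(log ξ)/(log η)⌋} − ξ) ), then d = ⌊(log ξ)/(log η)⌋. (ii) If (log ξ)/(log η) is an integer and x ≥ max( (1 − η²ξ)/(ξ(1−η)²) , ((log ξ)/(log η) + 2)/(ξ(1−η)) ), then d ∈ { (log ξ)/(log η) − 1 , (log ξ)/(log η) }. -/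

import Mathlib

open Filter Topology

/-- `seqB η x i = f^i(⌈x⌉)` where `f(y) = ⌈η y⌉`. -/
noncomputable def seqB (η x : ℝ) (i : ℕ) : ℝ :=
  (fun y : ℝ => ((⌈η * y⌉ : ℤ) : ℝ))^[i] ((⌈x⌉ : ℤ) : ℝ)

/-- `seqA η x i = η * seqB η x i`. -/
noncomputable def seqA (η x : ℝ) (i : ℕ) : ℝ := η * seqB η x i

lemma seqB_succ (η x : ℝ) (i : ℕ) :
    seqB η x (i+1) = ((⌈η * seqB η x i⌉ : ℤ) : ℝ) := by
  simp [seqB, Function.iterate_succ_apply']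

lemma seqB_lower {η : ℝ} (hη0 : 0 ≤ η) (x : ℝ) : ∀ i, η ^ i * x ≤ seqB η x i
  | 0 => by simpa [seqB] using Int.le_ceil x
  | (i+1) => by
      rw [seqB_succ]
      calc η ^ (i+1) * x = η * (η ^ i * x) := by ring
      _ ≤ η * seqB η x i := mul_le_mul_of_nonneg_left (seqB_lower hη0 x i) hη0
      _ ≤ _ := Int.le_ceil _

lemma seqB_upper {η : ℝ} (hη0 : 0 ≤ η) (hη1 : η ≤ 1) (x : ℝ) :
    ∀ i, seqB η x i < η ^ i * (x + 1) + i
  | 0 => by simpa [seqB] using Int.ceil_lt_add_one x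
  | (i+1) => by
      rw [seqB_succ]
      have h4 : (0:ℝ) ≤ i := Nat.cast_nonneg i
      have h5 : η * (i:ℝ) ≤ i := by nlinarith
      calc ((⌈η * seqB η x i⌉ : ℤ) : ℝ) < η * seqB η x i + 1 := Int.ceil_lt_add_one _
      _ ≤ η * (η ^ i * (x+1) + i) + 1 :=
          add_le_add_left (mul_le_mul_of_nonneg_left (seqB_upper hη0 hη1 x i).le hη0) 1
      _ = η ^ (i+1) * (x+1) + (η * i + 1) := by ring
      _ ≤ η ^ (i+1) * (x+1) + ((i:ℝ) + 1) := by linarith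
      _ = η ^ (i+1) * (x+1) + ((i+1 : ℕ) : ℝ) := by push_cast; ring

set_option maxHeartbeats 1000000 in
theorem stmt_19 (ξ η x : ℝ) (hξ : ξ ∈ Set.Ioo (0 : ℝ) 1) (hη : η ∈ Set.Ioo ξ 1)
    (d : ℕ) (hd1 : seqA η x d ≤ ξ * x) (hd2 : ∀ i : ℕ, i < d → ξ * x < seqA η x i) :
    ((¬ ∃ m : ℤ, (m : ℝ) = Real.log ξ / Real.log η) →
      max (max ((1 - η ^ 2 * ξ) / (ξ * (1 - η) ^ 2))
            (((⌊Real.log ξ / Real.log η⌋ : ℝ) + 2) /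
              (ξ - η ^ (⌊Real.log ξ / Real.log η⌋ + 1))))
          (1 / (η ^ ⌊Real.log ξ / Real.log η⌋ - ξ)) ≤ x →
      (d : ℤ) = ⌊Real.log ξ / Real.log η⌋) ∧
    ((∃ m : ℤ, (m : ℝ) = Real.log ξ / Real.log η) →
      max ((1 - η ^ 2 * ξ) / (ξ * (1 - η) ^ 2))
          ((Real.log ξ / Real.log η + 2) / (ξ * (1 - η))) ≤ x →
      ((d : ℝ) = Real.log ξ / Real.log η - 1 ∨ (d : ℝ) = Real.log ξ / Real.log η)) := by
  obtain ⟨hξ0, hξ1⟩ := hξ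
  obtain ⟨hξη, hη1⟩ := hη
  have hη0 : 0 < η := hξ0.trans hξη
  set r := Real.log ξ / Real.log η with hrdef
  have hlogη : Real.log η < 0 := Real.log_neg hη0 hη1
  have hlogξη : Real.log ξ < Real.log η := Real.log_lt_log hξ0 hξη
  have hr1 : 1 < r := by
    rw [hrdef, lt_div_iff_of_neg hlogη]; linarith
  -- key translations between powers and r
  have hpow_lt : ∀ n : ℕ, (n:ℝ) < r → ξ < η ^ n := by
    intro n hn
    have h1 : (n:ℝ) * Real.log η > Real.log ξ := by
      rw [hrdef, lt_div_iff_of_neg hlogη] at hn; linarith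
    have h2 : Real.log ξ < Real.log (η ^ n) := by rw [Real.log_pow]; linarith
    exact (Real.log_lt_log_iff hξ0 (pow_pos hη0 n)).mp h2
  have hpow_gt : ∀ n : ℕ, r < (n:ℝ) → η ^ n < ξ := by
    intro n hn
    have h1 : (n:ℝ) * Real.log η < Real.log ξ := by
      rw [hrdef, div_lt_iff_of_neg hlogη] at hn; linarith
    have h2 : Real.log (η ^ n) < Real.log ξ := by rw [Real.log_pow]; linarith
    exact (Real.log_lt_log_iff (pow_pos hη0 n) hξ0).mp h2
  constructor
  · -- case (i): r not an integer
    intro hnot hx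
    have hxB' : ((⌊r⌋ : ℝ) + 2) / (ξ - η ^ (⌊r⌋ + 1)) ≤ x :=
      le_trans (le_max_right _ _) (le_trans (le_max_left _ _) hx)
    have hxC' : 1 / (η ^ ⌊r⌋ - ξ) ≤ x := le_trans (le_max_right _ _) hx
    set K : ℕ := (⌊r⌋).toNat with hKdef
    have hk1 : (1:ℤ) ≤ ⌊r⌋ := Int.le_floor.mpr (by exact_mod_cast hr1.le)
    have hK : (K:ℤ) = ⌊r⌋ := Int.toNat_of_nonneg (by linarith)
    have hKR : (K:ℝ) = ((⌊r⌋:ℤ):ℝ) := by exact_mod_cast hK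
    have hKr : (K:ℝ) < r := by
      have h1 : ((⌊r⌋:ℤ):ℝ) ≤ r := Int.floor_le r
      have h2 : ((⌊r⌋:ℤ):ℝ) ≠ r := fun h => hnot ⟨⌊r⌋, h⟩
      rw [hKR]; exact lt_of_le_of_ne h1 h2
    have hrK1 : r < (K:ℝ) + 1 := by
      rw [hKR]; exact Int.lt_floor_add_one r
    have hξK : ξ < η ^ K := hpow_lt K hKr
    have hK1ξ : η ^ (K+1) < ξ := hpow_gt (K+1) (by push_cast; linarith)
    -- rewrite zpow to pow in the x-bounds
    have hz1 : η ^ (⌊r⌋:ℤ) = η ^ K := by rw [← hK, zpow_natCast]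
    have hz2 : η ^ ((⌊r⌋:ℤ) + 1) = η ^ (K+1) := by
      rw [← hK, show ((K:ℤ)+1) = ((K+1:ℕ):ℤ) by push_cast; ring, zpow_natCast]
    rw [hz1] at hxC'
    rw [hz2] at hxB'
    have hx0 : 0 < x := lt_of_lt_of_le (div_pos one_pos (by linarith)) hxC'
    have hxB : ((K:ℝ) + 2) ≤ (ξ - η ^ (K+1)) * x := by
      have hd : 0 < ξ - η ^ (K+1) := by linarith
      have h2 : ((⌊r⌋:ℝ)) = (K:ℝ) := by exact_mod_cast hK.symm
      rw [h2] at hxB'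
      calc ((K:ℝ) + 2) = ((K:ℝ)+2)/(ξ - η ^ (K+1)) * (ξ - η ^ (K+1)) := by field_simp
      _ ≤ x * (ξ - η ^ (K+1)) := mul_le_mul_of_nonneg_right hxB' hd.le
      _ = _ := by ring
    -- d ≤ K
    have hdK : d ≤ K := by
      by_contra h
      push_neg at h
      have h1 : ξ * x < η * seqB η x K := hd2 K h
      have h2 : seqB η x K < η ^ K * (x+1) + K := seqB_upper hη0.le hη1.le x K
      have h3 : η * seqB η x K ≤ η * (η ^ K * (x+1) + K) :=
        mul_le_mul_of_nonneg_left h2.le hη0.le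
      have h4 : η * (K:ℝ) ≤ K := by nlinarith [Nat.cast_nonneg (α := ℝ) K]
      have h5 : η * (η ^ K * (x+1) + (K:ℝ)) = η^(K+1)*x + η^(K+1) + η*(K:ℝ) := by ring
      linarith
    have hKd : K ≤ d := by
      by_contra h
      push_neg at h
      have hd1' : d + 1 ≤ K := h
      have h1 : η ^ d * x ≤ seqB η x d := seqB_lower hη0.le x d
      have h2 : η ^ K ≤ η ^ (d+1) := pow_le_pow_of_le_one hη0.le hη1.le hd1'
      have h3 : η ^ (d+1) * x ≤ η * seqB η x d := by
        calc η ^ (d+1) * x = η * (η ^ d * x) := by ring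
        _ ≤ η * seqB η x d := mul_le_mul_of_nonneg_left h1 hη0.le
      have h4 : ξ * x < η ^ K * x := by nlinarith
      have h5 : η ^ K * x ≤ η ^ (d+1) * x := mul_le_mul_of_nonneg_right h2 hx0.le
      have : ξ * x < seqA η x d := by
        unfold seqA; linarith
      linarith [hd1]
    have : d = K := le_antisymm hdK hKd
    rw [this, hK]
  · -- case (ii): r = m integer
    rintro ⟨m, hm⟩ hx
    have hxB' : (r + 2) / (ξ * (1 - η)) ≤ x := le_trans (le_max_right _ _) hx
    have hm1 : (1:ℤ) < m := by exact_mod_cast hm ▸ hr1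
    set M : ℕ := m.toNat with hMdef
    have hM : (M:ℤ) = m := Int.toNat_of_nonneg (by linarith)
    have hMr : (M:ℝ) = r := by
      rw [← hm]; exact_mod_cast congrArg Int.cast hM
    have hM2 : 2 ≤ M := by omega
    have hξM : ξ = η ^ M := by
      have h1 : Real.log (η ^ M) = Real.log ξ := by
        rw [Real.log_pow, hMr, hrdef, div_mul_cancel₀ _ (ne_of_lt hlogη)]
      have := Real.exp_log (pow_pos hη0 M)
      rw [h1, Real.exp_log hξ0] at this
      exact this
    have hx0 : 0 < x := by
      have : 0 < (r + 2) / (ξ * (1 - η)) := by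
        apply div_pos (by linarith) (by nlinarith)
      linarith
    have hxB : (M:ℝ) + 2 ≤ ξ * (1 - η) * x := by
      have hd : 0 < ξ * (1 - η) := by nlinarith
      calc (M:ℝ) + 2 = ((M:ℝ)+2)/(ξ*(1-η)) * (ξ*(1-η)) := by field_simp
      _ ≤ x * (ξ*(1-η)) := mul_le_mul_of_nonneg_right (by rw [hMr]; exact hxB') hd.le
      _ = _ := by ring
    -- d ≤ M
    have hdM : d ≤ M := by
      by_contra h
      push_neg at h
      have h1 : ξ * x < η * seqB η x M := hd2 M h
      have h2 : seqB η x M < η ^ M * (x+1) + M := seqB_upper hη0.le hη1.le x M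
      have h3 : η * seqB η x M ≤ η * (η ^ M * (x+1) + M) :=
        mul_le_mul_of_nonneg_left h2.le hη0.le
      have h4 : η * (M:ℝ) ≤ M := by nlinarith [Nat.cast_nonneg (α := ℝ) M]
      have h5 : η * (η ^ M * (x+1) + M) = η * ξ * x + η * ξ + η * M := by
        rw [hξM]; ring
      have h6 : η * ξ < 1 := by nlinarith
      linarith
    -- M - 1 ≤ d
    have hMd : M ≤ d + 1 := by
      by_contra h
      push_neg at h
      have hd1' : d + 1 ≤ M - 1 := by omega
      have h1 : η ^ d * x ≤ seqB η x d := seqB_lower hη0.le x d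
      have h2 : η ^ (M-1) ≤ η ^ (d+1) := pow_le_pow_of_le_one hη0.le hη1.le hd1'
      have h3 : η ^ (d+1) * x ≤ η * seqB η x d := by
        calc η ^ (d+1) * x = η * (η ^ d * x) := by ring
        _ ≤ η * seqB η x d := mul_le_mul_of_nonneg_left h1 hη0.le
      have h6 : η ^ M < η ^ (M-1) := by
        have : η ^ M = η ^ (M-1) * η := by
          rw [← pow_succ]; congr 1; omega
        nlinarith [pow_pos hη0 (M-1)]
      have h4 : ξ * x < η ^ (M-1) * x := by
        rw [hξM]; exact mul_lt_mul_of_pos_right h6 hx0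
      have h5 : η ^ (M-1) * x ≤ η ^ (d+1) * x := mul_le_mul_of_nonneg_right h2 hx0.le
      have : ξ * x < seqA η x d := by unfold seqA; linarith
      linarith [hd1]
    have : d = M - 1 ∨ d = M := by omega
    rcases this with h | h
    · left
      rw [h, ← hMr]
      have : (M:ℝ) = ((M-1:ℕ):ℝ) + 1 := by
        have : M - 1 + 1 = M := by omega
        exact_mod_cast (congrArg (Nat.cast (R := ℝ)) this).symm
      rw [this]; ring
    · right; rw [h, hMr]
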